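/- arXiv:1911.09097 — 7 statements merged into one kernel-verified Lean document; each statement's English description precedes it below -/
import Mathlib

section
/- Under the Dirac dual ψ̄ = ψ†γ0, all same-type and mixed-type Dirac norms of the boosted Elko spinors vanish: λ̄^S_h · λ^S_h = 0 and λ̄^A_h · λ^A_h = 0 for each helicity label h ∈ {(-,+), (+,-)}, and λ̄^S_h · λ^A_{h'} = 0 and λ̄^A_h · λ^S_{h'} = 0 for all helicity labels h, h' ∈ {(-,+), (+,-)}. -/
open Matrix Complex

noncomputable section

/-- Pauli matrices -/
def σ1 : Matrix (Fin 2) (Fin 2) ℂ := !![0, 1; 1, 0]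
def σ2 : Matrix (Fin 2) (Fin 2) ℂ := !![0, -I; I, 0]
def σ3 : Matrix (Fin 2) (Fin 2) ℂ := !![1, 0; 0, -1]

/-- Dirac matrices in the Weyl representation, blocks [[0,1],[1,0]], [[0,σk],[-σk,0]] -/
def γ0 : Matrix (Fin 4) (Fin 4) ℂ := !![0,0,1,0; 0,0,0,1; 1,0,0,0; 0,1,0,0]
def γ1 : Matrix (Fin 4) (Fin 4) ℂ := !![0,0,0,1; 0,0,1,0; 0,-1,0,0; -1,0,0,0]
def γ2 : Matrix (Fin 4) (Fin 4) ℂ := !![0,0,0,-I; 0,0,I,0; 0,I,0,0; -I,0,0,0]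
def γ3 : Matrix (Fin 4) (Fin 4) ℂ := !![0,0,1,0; 0,0,0,-1; -1,0,0,0; 0,1,0,0]

/-- the energy E = sqrt(p² + m²) -/
def Ee (m p : ℝ) : ℝ := Real.sqrt (p^2 + m^2)
/-- boost factors B± = sqrt((E+m)/2)(1 ± p/(E+m)) -/
def Bp (m p : ℝ) : ℝ := Real.sqrt ((Ee m p + m)/2) * (1 + p/(Ee m p + m))
def Bm (m p : ℝ) : ℝ := Real.sqrt ((Ee m p + m)/2) * (1 - p/(Ee m p + m))

/-- e^{iφ/2}, e^{-iφ/2}, e^{iφ}, e^{-iφ} -/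
def eP (φ : ℝ) : ℂ := Complex.exp (I * (φ:ℂ) / 2)
def eM (φ : ℝ) : ℂ := Complex.exp (-(I * (φ:ℂ)) / 2)
def ePf (φ : ℝ) : ℂ := Complex.exp (I * (φ:ℂ))
def eMf (φ : ℝ) : ℂ := Complex.exp (-(I * (φ:ℂ)))

/-- boosted Elko spinors -/
def lamS₁ (m p θ φ : ℝ) : Fin 4 → ℂ :=
  ((Bm m p : ℝ) : ℂ) • ![ -I * (Real.sin (θ/2) : ℂ) * eM φ,
                           I * (Real.cos (θ/2) : ℂ) * eP φ,
                           (Real.cos (θ/2) : ℂ) * eM φ,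
                           (Real.sin (θ/2) : ℂ) * eP φ ]

def lamS₂ (m p θ φ : ℝ) : Fin 4 → ℂ :=
  ((Bp m p : ℝ) : ℂ) • ![ I * (Real.cos (θ/2) : ℂ) * eM φ,
                           I * (Real.sin (θ/2) : ℂ) * eP φ,
                           (Real.sin (θ/2) : ℂ) * eM φ,
                           -(Real.cos (θ/2) : ℂ) * eP φ ]

def lamA₁ (m p θ φ : ℝ) : Fin 4 → ℂ :=
  ((Bm m p : ℝ) : ℂ) • ![ I * (Real.sin (θ/2) : ℂ) * eM φ,
                           -I * (Real.cos (θ/2) : ℂ) * eP φ,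
                           (Real.cos (θ/2) : ℂ) * eM φ,
                           (Real.sin (θ/2) : ℂ) * eP φ ]

def lamA₂ (m p θ φ : ℝ) : Fin 4 → ℂ :=
  ((Bp m p : ℝ) : ℂ) • ![ -I * (Real.cos (θ/2) : ℂ) * eM φ,
                           -I * (Real.sin (θ/2) : ℂ) * eP φ,
                           (Real.sin (θ/2) : ℂ) * eM φ,
                           -(Real.cos (θ/2) : ℂ) * eP φ ]

/-- the Ξ(p) operator -/
def Ξop (m p θ φ : ℝ) : Matrix (Fin 4) (Fin 4) ℂ :=
  (1/(m:ℂ)) •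
    !![ I * ((p * Real.sin θ : ℝ) : ℂ),
        -I * ((Ee m p + p * Real.cos θ : ℝ) : ℂ) * eMf φ, 0, 0;
        I * ((Ee m p - p * Real.cos θ : ℝ) : ℂ) * ePf φ,
        -I * ((p * Real.sin θ : ℝ) : ℂ), 0, 0;
        0, 0, -I * ((p * Real.sin θ : ℝ) : ℂ),
        -I * ((Ee m p - p * Real.cos θ : ℝ) : ℂ) * eMf φ;
        0, 0, I * ((Ee m p + p * Real.cos θ : ℝ) : ℂ) * ePf φ,
        I * ((p * Real.sin θ : ℝ) : ℂ) ]

/-- the G(φ) matrix appearing in the Elko spin sums -/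
def Gmat (φ : ℝ) : Matrix (Fin 4) (Fin 4) ℂ :=
  !![0, 0, 0, -I * eMf φ;
     0, 0, I * ePf φ, 0;
     0, -I * eMf φ, 0, 0;
     I * ePf φ, 0, 0, 0]

/-- momentum slash pslash = E γ0 + p sinθ cosφ γ1 + p sinθ sinφ γ2 + p cosθ γ3 -/
def pslash (m p θ φ : ℝ) : Matrix (Fin 4) (Fin 4) ℂ :=
  ((Ee m p : ℝ) : ℂ) • γ0 + ((p * Real.sin θ * Real.cos φ : ℝ) : ℂ) • γ1
    + ((p * Real.sin θ * Real.sin φ : ℝ) : ℂ) • γ2 + ((p * Real.cos θ : ℝ) : ℂ) • γ3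

/-- Elko dual rows ¬λ -/
def dS₁ (m p θ φ : ℝ) : Fin 4 → ℂ := I • Matrix.vecMul (star (lamS₂ m p θ φ)) γ0
def dS₂ (m p θ φ : ℝ) : Fin 4 → ℂ := (-I) • Matrix.vecMul (star (lamS₁ m p θ φ)) γ0
def dA₁ (m p θ φ : ℝ) : Fin 4 → ℂ := I • Matrix.vecMul (star (lamA₂ m p θ φ)) γ0
def dA₂ (m p θ φ : ℝ) : Fin 4 → ℂ := (-I) • Matrix.vecMul (star (lamA₁ m p θ φ)) γ0

end

/-- the Dirac-dual pairing ψ̄χ = ψ†γ0 χ -/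
noncomputable def diracPair (ψ χ : Fin 4 → ℂ) : ℂ := dotProduct (Matrix.vecMul (star ψ) γ0) χ

/-- Under the Dirac dual ψ̄ = ψ†γ0, all same-type and mixed-type Dirac norms of the
boosted Elko spinors vanish. -/
theorem elko_dirac_norms_vanish (m p θ φ : ℝ) (hm : 0 < m) (hp : 0 ≤ p) :
    -- same-type, same-helicity norms
    diracPair (lamS₁ m p θ φ) (lamS₁ m p θ φ) = 0 ∧
    diracPair (lamS₂ m p θ φ) (lamS₂ m p θ φ) = 0 ∧
    diracPair (lamA₁ m p θ φ) (lamA₁ m p θ φ) = 0 ∧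
    diracPair (lamA₂ m p θ φ) (lamA₂ m p θ φ) = 0 ∧
    -- mixed S-A products, all helicity combinations
    diracPair (lamS₁ m p θ φ) (lamA₁ m p θ φ) = 0 ∧
    diracPair (lamS₁ m p θ φ) (lamA₂ m p θ φ) = 0 ∧
    diracPair (lamS₂ m p θ φ) (lamA₁ m p θ φ) = 0 ∧
    diracPair (lamS₂ m p θ φ) (lamA₂ m p θ φ) = 0 ∧
    -- mixed A-S products, all helicity combinations
    diracPair (lamA₁ m p θ φ) (lamS₁ m p θ φ) = 0 ∧
    diracPair (lamA₁ m p θ φ) (lamS₂ m p θ φ) = 0 ∧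
    diracPair (lamA₂ m p θ φ) (lamS₁ m p θ φ) = 0 ∧
    diracPair (lamA₂ m p θ φ) (lamS₂ m p θ φ) = 0 := by
  have hsP : (starRingEnd ℂ) (eP φ) = eM φ := by
    rw [eP, eM, ← Complex.exp_conj]
    congr 1
    simp [map_div₀, Complex.conj_I, Complex.conj_ofReal, Complex.conj_ofNat]
  have hsM : (starRingEnd ℂ) (eM φ) = eP φ := by
    rw [eM, eP, ← Complex.exp_conj]
    congr 1
    simp [map_div₀, Complex.conj_I, Complex.conj_ofReal, Complex.conj_ofNat]
  have hPM : eP φ * eM φ = 1 := by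
    rw [eP, eM, ← Complex.exp_add]; ring_nf; exact Complex.exp_zero
  refine ⟨?_, ?_, ?_, ?_, ?_, ?_, ?_, ?_, ?_, ?_, ?_, ?_⟩ <;>
  · simp only [diracPair, lamS₁, lamS₂, lamA₁, lamA₂, γ0, Matrix.vecMul, dotProduct,
      Fin.sum_univ_four, Matrix.cons_val', Matrix.cons_val_zero, Matrix.cons_val_one,
      Matrix.head_cons, Matrix.cons_val_fin_one, Matrix.empty_val',
      Matrix.cons_val_two, Matrix.cons_val_three, Matrix.tail_cons, Matrix.head_fin_const,
      Matrix.of_apply, Pi.smul_apply, Pi.star_apply, smul_eq_mul,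
      Complex.star_def, _root_.map_mul, map_neg, Complex.conj_I, Complex.conj_ofReal, hsP, hsM]
    ring_nf
end

section
/- Under the Dirac dual ψ̄ = ψ†γ0, the opposite-helicity Dirac inner products of the boosted Elko spinors are purely imaginary: λ̄^S_{-,+} · λ^S_{+,-} = 2·i·m, λ̄^S_{+,-} · λ^S_{-,+} = -2·i·m, λ̄^A_{-,+} · λ^A_{+,-} = -2·i·m, and λ̄^A_{+,-} · λ^A_{-,+} = 2·i·m. -/
open Matrix Complex

lemma BmBp (m p : ℝ) (hm : 0 < m) (hp : 0 ≤ p) : Bm m p * Bp m p = m := by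
  have hE2 : Ee m p ^ 2 = p ^ 2 + m ^ 2 := Real.sq_sqrt (by positivity)
  have hE0 : 0 ≤ Ee m p := Real.sqrt_nonneg _
  have hEm : 0 < Ee m p + m := by linarith
  have hs : Real.sqrt ((Ee m p + m) / 2) * Real.sqrt ((Ee m p + m) / 2)
      = (Ee m p + m) / 2 := Real.mul_self_sqrt (by positivity)
  have h0 : Bm m p * Bp m p
      = Real.sqrt ((Ee m p + m) / 2) ^ 2
        * ((1 - p / (Ee m p + m)) * (1 + p / (Ee m p + m))) := by
    rw [Bm, Bp]; ring
  rw [Real.sq_sqrt (by positivity : (0:ℝ) ≤ (Ee m p + m) / 2)] at h0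
  have hne : Ee m p + m ≠ 0 := ne_of_gt hEm
  have key : (1 - p / (Ee m p + m)) * (1 + p / (Ee m p + m)) = 2 * m / (Ee m p + m) := by
    field_simp
    nlinarith [hE2]
  rw [h0, key]
  field_simp

lemma starEM (φ : ℝ) : (starRingEnd ℂ) (eM φ) = eP φ := by
  rw [eM, eP, ← Complex.exp_conj]
  congr 1
  simp [map_div₀, map_neg, _root_.map_mul, Complex.conj_I, Complex.conj_ofReal, map_ofNat]

lemma starEP (φ : ℝ) : (starRingEnd ℂ) (eP φ) = eM φ := by
  rw [eM, eP, ← Complex.exp_conj]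
  congr 1
  simp [map_div₀, map_neg, _root_.map_mul, Complex.conj_I, Complex.conj_ofReal, map_ofNat]

lemma ePeM (φ : ℝ) : eP φ * eM φ = 1 := by
  rw [eP, eM, ← Complex.exp_add]
  rw [show I * (φ:ℂ) / 2 + -(I * (φ:ℂ)) / 2 = 0 by ring, Complex.exp_zero]

lemma pair_expand (ψ χ : Fin 4 → ℂ) :
    diracPair ψ χ = star (ψ 0) * χ 2 + star (ψ 1) * χ 3
      + star (ψ 2) * χ 0 + star (ψ 3) * χ 1 := by
  simp [diracPair, dotProduct, Matrix.vecMul, γ0, Fin.sum_univ_four,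
    Matrix.cons_val_zero, Matrix.cons_val_one, Matrix.head_cons, Matrix.head_fin_const]
  ring

/-- Under the Dirac dual, the opposite-helicity Dirac inner products of the boosted Elko
spinors are purely imaginary: ±2im. -/
theorem elko_dirac_cross_products_imaginary (m p θ φ : ℝ) (hm : 0 < m) (hp : 0 ≤ p) :
    diracPair (lamS₁ m p θ φ) (lamS₂ m p θ φ) = 2 * I * (m : ℂ) ∧
    diracPair (lamS₂ m p θ φ) (lamS₁ m p θ φ) = -(2 * I * (m : ℂ)) ∧
    diracPair (lamA₁ m p θ φ) (lamA₂ m p θ φ) = -(2 * I * (m : ℂ)) ∧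
    diracPair (lamA₂ m p θ φ) (lamA₁ m p θ φ) = 2 * I * (m : ℂ) := by
  have hBB : ((Bm m p : ℝ) : ℂ) * ((Bp m p : ℝ) : ℂ) = (m : ℂ) := by
    rw [← Complex.ofReal_mul, BmBp m p hm hp]
  have hsc : ((Real.sin (θ/2) : ℝ) : ℂ)^2 + ((Real.cos (θ/2) : ℝ) : ℂ)^2 = 1 := by
    rw [← Complex.ofReal_pow, ← Complex.ofReal_pow, ← Complex.ofReal_add,
      Real.sin_sq_add_cos_sq, Complex.ofReal_one]
  have hPM := ePeM φ
  have combo : ∀ ψ χ : Fin 4 → ℂ, True := fun _ _ => trivial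
  refine ⟨?_, ?_, ?_, ?_⟩ <;>
    rw [pair_expand] <;>
    simp only [lamS₁, lamS₂, lamA₁, lamA₂, Pi.smul_apply, smul_eq_mul,
      Matrix.cons_val_zero, Matrix.cons_val_one, Matrix.head_cons,
      Matrix.cons_val_two, Matrix.cons_val_three, Matrix.tail_cons,
      star_mul', Complex.star_def, Complex.conj_ofReal, Complex.conj_I,
      starEM, starEP, _root_.map_mul, map_neg]
  · linear_combination (2*I*(eP φ * eM φ)*(((Real.sin (θ/2):ℝ):ℂ)^2+((Real.cos (θ/2):ℝ):ℂ)^2)) * hBB + (2*I*(m:ℂ)*(eP φ * eM φ)) * hsc + (2*I*(m:ℂ)) * hPM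
  · linear_combination (-(2*I*(eP φ * eM φ))*(((Real.sin (θ/2):ℝ):ℂ)^2+((Real.cos (θ/2):ℝ):ℂ)^2)) * hBB + (-(2*I*(m:ℂ))*(eP φ * eM φ)) * hsc + (-(2*I*(m:ℂ))) * hPM
  · linear_combination (-(2*I*(eP φ * eM φ))*(((Real.sin (θ/2):ℝ):ℂ)^2+((Real.cos (θ/2):ℝ):ℂ)^2)) * hBB + (-(2*I*(m:ℂ))*(eP φ * eM φ)) * hsc + (-(2*I*(m:ℂ))) * hPM
  · linear_combination (2*I*(eP φ * eM φ)*(((Real.sin (θ/2):ℝ):ℂ)^2+((Real.cos (θ/2):ℝ):ℂ)^2)) * hBB + (2*I*(m:ℂ)*(eP φ * eM φ)) * hsc + (2*I*(m:ℂ)) * hPM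
end

section
/- The operator Ξ(p) squares to the identity: Ξ(p)·Ξ(p) = 1 (the 4×4 identity matrix). In particular Ξ(p) is invertible and Ξ(p)⁻¹ = Ξ(p). -/
open Matrix Complex

lemma block_sq (a b c d e f k : ℂ) (h1 : a^2 + b*c = k) (h2 : d^2 + e*f = k) :
    !![a,b,0,0; c,-a,0,0; 0,0,d,e; 0,0,f,-d] * !![a,b,0,0; c,-a,0,0; 0,0,d,e; 0,0,f,-d]
      = k • (1 : Matrix (Fin 4) (Fin 4) ℂ) := by
  ext i j
  fin_cases i <;> fin_cases j <;>
    simp [Matrix.mul_apply, Fin.sum_univ_four, Matrix.one_apply, Matrix.smul_apply,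
      Matrix.vecHead, Matrix.vecTail, -mul_eq_zero]
  · linear_combination h1
  · ring
  · ring
  · linear_combination h1
  · linear_combination h2
  · ring
  · ring
  · linear_combination h2

/-- Ξ(p) squares to the identity; in particular Ξ(p) is invertible and Ξ(p)⁻¹ = Ξ(p). -/
theorem xi_squares_to_one (m p θ φ : ℝ) (hm : 0 < m) (hp : 0 ≤ p) :
    Ξop m p θ φ * Ξop m p θ φ = 1 ∧
    IsUnit (Ξop m p θ φ) ∧ (Ξop m p θ φ)⁻¹ = Ξop m p θ φ := by
  have hE2 : ((Ee m p : ℝ) : ℂ)^2 = (p:ℂ)^2 + (m:ℂ)^2 := by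
    have : (Ee m p)^2 = p^2 + m^2 := Real.sq_sqrt (by positivity)
    exact_mod_cast this
  have hm' : (m:ℂ) ≠ 0 := by exact_mod_cast hm.ne'
  have hexp : ePf φ * eMf φ = 1 := by
    rw [ePf, eMf, ← Complex.exp_add]; ring_nf; exact Complex.exp_zero
  have hsc : ((Real.sin θ : ℝ) : ℂ)^2 + ((Real.cos θ : ℝ) : ℂ)^2 = 1 := by
    exact_mod_cast Real.sin_sq_add_cos_sq θ
  push_cast at hsc
  have hIc : (I:ℂ)^2 = -1 := Complex.I_sq
  have h := mul_comm (ePf φ) (eMf φ) ▸ hexp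
  have key := block_sq (I * ((p * Real.sin θ : ℝ) : ℂ))
      (-I * ((Ee m p + p * Real.cos θ : ℝ) : ℂ) * eMf φ)
      (I * ((Ee m p - p * Real.cos θ : ℝ) : ℂ) * ePf φ)
      (-(I * ((p * Real.sin θ : ℝ) : ℂ)))
      (-I * ((Ee m p - p * Real.cos θ : ℝ) : ℂ) * eMf φ)
      (I * ((Ee m p + p * Real.cos θ : ℝ) : ℂ) * ePf φ)
      ((m:ℂ)^2)
      (by push_cast
          linear_combination (I^2*(p:ℂ)^2*(Complex.cos θ)^2 - I^2*((Ee m p:ℝ):ℂ)^2) * h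
            + ((p:ℂ)^2*(Complex.sin θ)^2 + (p:ℂ)^2*(Complex.cos θ)^2 - ((Ee m p:ℝ):ℂ)^2) * hIc
            - (p:ℂ)^2 * hsc + hE2)
      (by push_cast
          linear_combination (I^2*(p:ℂ)^2*(Complex.cos θ)^2 - I^2*((Ee m p:ℝ):ℂ)^2) * h
            + ((p:ℂ)^2*(Complex.sin θ)^2 + (p:ℂ)^2*(Complex.cos θ)^2 - ((Ee m p:ℝ):ℂ)^2) * hIc
            - (p:ℂ)^2 * hsc + hE2)
  have hXi : Ξop m p θ φ = (1/(m:ℂ)) •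
      !![ I * ((p * Real.sin θ : ℝ) : ℂ),
          -I * ((Ee m p + p * Real.cos θ : ℝ) : ℂ) * eMf φ, 0, 0;
          I * ((Ee m p - p * Real.cos θ : ℝ) : ℂ) * ePf φ,
          -(I * ((p * Real.sin θ : ℝ) : ℂ)), 0, 0;
          0, 0, -(I * ((p * Real.sin θ : ℝ) : ℂ)),
          -I * ((Ee m p - p * Real.cos θ : ℝ) : ℂ) * eMf φ;
          0, 0, I * ((Ee m p + p * Real.cos θ : ℝ) : ℂ) * ePf φ,
          -(-(I * ((p * Real.sin θ : ℝ) : ℂ))) ] := by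
    rw [Ξop]
    congr 1
    ext i j
    fin_cases i <;> fin_cases j <;> simp <;> ring
  have h1 : Ξop m p θ φ * Ξop m p θ φ = 1 := by
    rw [hXi, Matrix.smul_mul, Matrix.mul_smul, key, smul_smul, smul_smul]
    rw [show (1/(m:ℂ)) * (1/(m:ℂ)) * (m:ℂ)^2 = 1 by field_simp, one_smul]
  refine ⟨h1, ⟨⟨_, _, h1, h1⟩, rfl⟩, Matrix.inv_eq_right_inv h1⟩
end

section
/- The operator Ξ(p) exchanges the helicities of the boosted Elko spinors up to a factor ∓i: Ξ(p)·λ^S_{-,+} = -i·λ^S_{+,-}, Ξ(p)·λ^S_{+,-} = i·λ^S_{-,+}, Ξ(p)·λ^A_{-,+} = -i·λ^A_{+,-}, and Ξ(p)·λ^A_{+,-} = i·λ^A_{-,+}. Consequently [Ξ(p)·λ^{S/A}_{-,+}]†γ0 = +i·(λ^{S/A}_{+,-})†γ0 and [Ξ(p)·λ^{S/A}_{+,-}]†γ0 = -i·(λ^{S/A}_{-,+})†γ0, i.e. the Elko dual ¬λ := [Ξ(p)λ]†γ0 is the opposite-helicity Dirac dual up to a factor ±i. -/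
open Matrix Complex

/-- Ξ(p) exchanges helicities of the boosted Elko spinors up to ∓i, and consequently the
Elko dual ¬λ := [Ξ(p)λ]†γ0 is the opposite-helicity Dirac dual up to a factor ±i. -/
theorem xi_exchanges_helicities (m p θ φ : ℝ) (hm : 0 < m) (hp : 0 ≤ p) :
    (Ξop m p θ φ).mulVec (lamS₁ m p θ φ) = (-I) • lamS₂ m p θ φ ∧
    (Ξop m p θ φ).mulVec (lamS₂ m p θ φ) = I • lamS₁ m p θ φ ∧
    (Ξop m p θ φ).mulVec (lamA₁ m p θ φ) = (-I) • lamA₂ m p θ φ ∧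
    (Ξop m p θ φ).mulVec (lamA₂ m p θ φ) = I • lamA₁ m p θ φ ∧
    Matrix.vecMul (star ((Ξop m p θ φ).mulVec (lamS₁ m p θ φ))) γ0 =
      I • Matrix.vecMul (star (lamS₂ m p θ φ)) γ0 ∧
    Matrix.vecMul (star ((Ξop m p θ φ).mulVec (lamA₁ m p θ φ))) γ0 =
      I • Matrix.vecMul (star (lamA₂ m p θ φ)) γ0 ∧
    Matrix.vecMul (star ((Ξop m p θ φ).mulVec (lamS₂ m p θ φ))) γ0 =
      (-I) • Matrix.vecMul (star (lamS₁ m p θ φ)) γ0 ∧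
    Matrix.vecMul (star ((Ξop m p θ φ).mulVec (lamA₂ m p θ φ))) γ0 =
      (-I) • Matrix.vecMul (star (lamA₁ m p θ φ)) γ0 := by
  have hE2 : Ee m p ^ 2 = p ^ 2 + m ^ 2 := Real.sq_sqrt (by positivity)
  have hE0 : 0 ≤ Ee m p := Real.sqrt_nonneg _
  have hEm : 0 < Ee m p + m := by linarith
  have h1 : Bm m p * (Ee m p + p) = m * Bp m p := by
    unfold Bp Bm
    field_simp
    linear_combination hE2
  have h2 : Bp m p * (Ee m p - p) = m * Bm m p := by
    unfold Bp Bm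
    field_simp
    linear_combination hE2
  have hm0 : (m:ℂ) ≠ 0 := by exact_mod_cast hm.ne'
  have hmu : (m:ℂ) * ((m:ℂ))⁻¹ = 1 := mul_inv_cancel₀ hm0
  have hI : (I:ℂ) * I = -1 := Complex.I_mul_I
  have hab : eP φ * eM φ = 1 := by
    rw [eP, eM, ← Complex.exp_add,
      show I*(φ:ℂ)/2 + -(I*(φ:ℂ))/2 = 0 by ring, Complex.exp_zero]
  have hPf : ePf φ = eP φ * eP φ := by
    rw [ePf, eP, ← Complex.exp_add]; congr 1; ring
  have hMf : eMf φ = eM φ * eM φ := by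
    rw [eMf, eM, ← Complex.exp_add]; congr 1; ring
  have hsinC : Complex.sin (θ:ℂ) = 2 * Complex.sin ((θ:ℂ)/2) * Complex.cos ((θ:ℂ)/2) := by
    rw [← Complex.sin_two_mul]; congr 1; ring
  have hscC : (Complex.sin ((θ:ℂ)/2))^2 + (Complex.cos ((θ:ℂ)/2))^2 = 1 :=
    Complex.sin_sq_add_cos_sq _
  have hcosC : Complex.cos (θ:ℂ) = 1 - 2 * Complex.sin ((θ:ℂ)/2)^2 := by
    have hth : Complex.cos (θ:ℂ) = Complex.cos (2*((θ:ℂ)/2)) := by congr 1; ring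
    rw [hth, Complex.cos_two_mul]; linear_combination 2*hscC
  have h1C : (Bm m p : ℂ) * ((Ee m p : ℂ) + (p:ℂ)) = (m:ℂ) * (Bp m p : ℂ) := by
    exact_mod_cast h1
  have h2C : (Bp m p : ℂ) * ((Ee m p : ℂ) - (p:ℂ)) = (m:ℂ) * (Bm m p : ℂ) := by
    exact_mod_cast h2
  have HS1 : (Ξop m p θ φ).mulVec (lamS₁ m p θ φ) = (-I) • lamS₂ m p θ φ := by
    funext i
    fin_cases i <;>
      simp [Ξop, lamS₁, lamS₂, lamA₁, lamA₂, Matrix.mulVec, dotProduct,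
        Fin.sum_univ_four, hPf, hMf] <;>
      rw [hsinC, hcosC]
    · linear_combination (eM φ * ((Bp m p:ℝ):ℂ) * Complex.cos ((θ:ℂ)/2) + (-2) * eM φ * ((Bm m p:ℝ):ℂ) * (Complex.sin ((θ:ℂ)/2))^2 * Complex.cos ((θ:ℂ)/2) * ((m:ℂ))⁻¹ * (p:ℂ) + (-1) * eP φ * (eM φ)^2 * ((Bm m p:ℝ):ℂ) * Complex.cos ((θ:ℂ)/2) * ((m:ℂ))⁻¹ * (p:ℂ) + 2 * eP φ * (eM φ)^2 * ((Bm m p:ℝ):ℂ) * (Complex.sin ((θ:ℂ)/2))^2 * Complex.cos ((θ:ℂ)/2) * ((m:ℂ))⁻¹ * (p:ℂ) + (-1) * eP φ * (eM φ)^2 * ((Bm m p:ℝ):ℂ) * ((Ee m p:ℝ):ℂ) * Complex.cos ((θ:ℂ)/2) * ((m:ℂ))⁻¹) * hI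
        + (eM φ * ((Bp m p:ℝ):ℂ) * Complex.cos ((θ:ℂ)/2)) * hmu
        + (eM φ * ((Bm m p:ℝ):ℂ) * Complex.cos ((θ:ℂ)/2) * ((m:ℂ))⁻¹ * (p:ℂ) + (-2) * eM φ * ((Bm m p:ℝ):ℂ) * (Complex.sin ((θ:ℂ)/2))^2 * Complex.cos ((θ:ℂ)/2) * ((m:ℂ))⁻¹ * (p:ℂ) + eM φ * ((Bm m p:ℝ):ℂ) * ((Ee m p:ℝ):ℂ) * Complex.cos ((θ:ℂ)/2) * ((m:ℂ))⁻¹) * hab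
        + (eM φ * Complex.cos ((θ:ℂ)/2) * ((m:ℂ))⁻¹) * h1C
    · linear_combination (eP φ * ((Bp m p:ℝ):ℂ) * Complex.sin ((θ:ℂ)/2) + (-2) * eP φ * ((Bm m p:ℝ):ℂ) * Complex.sin ((θ:ℂ)/2) * (Complex.cos ((θ:ℂ)/2))^2 * ((m:ℂ))⁻¹ * (p:ℂ) + (eP φ)^2 * eM φ * ((Bm m p:ℝ):ℂ) * Complex.sin ((θ:ℂ)/2) * ((m:ℂ))⁻¹ * (p:ℂ) + (-2) * (eP φ)^2 * eM φ * ((Bm m p:ℝ):ℂ) * (Complex.sin ((θ:ℂ)/2))^3 * ((m:ℂ))⁻¹ * (p:ℂ) + (-1) * (eP φ)^2 * eM φ * ((Bm m p:ℝ):ℂ) * ((Ee m p:ℝ):ℂ) * Complex.sin ((θ:ℂ)/2) * ((m:ℂ))⁻¹) * hI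
        + (eP φ * ((Bp m p:ℝ):ℂ) * Complex.sin ((θ:ℂ)/2)) * hmu
        + ((-1) * eP φ * ((Bm m p:ℝ):ℂ) * Complex.sin ((θ:ℂ)/2) * ((m:ℂ))⁻¹ * (p:ℂ) + 2 * eP φ * ((Bm m p:ℝ):ℂ) * (Complex.sin ((θ:ℂ)/2))^3 * ((m:ℂ))⁻¹ * (p:ℂ) + eP φ * ((Bm m p:ℝ):ℂ) * ((Ee m p:ℝ):ℂ) * Complex.sin ((θ:ℂ)/2) * ((m:ℂ))⁻¹) * hab
        + (eP φ * Complex.sin ((θ:ℂ)/2) * ((m:ℂ))⁻¹) * h1C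
        + (2 * eP φ * ((Bm m p:ℝ):ℂ) * Complex.sin ((θ:ℂ)/2) * ((m:ℂ))⁻¹ * (p:ℂ)) * hscC
    · linear_combination ((-1) * I * eM φ * ((Bp m p:ℝ):ℂ) * Complex.sin ((θ:ℂ)/2)) * hmu
        + (I * eM φ * ((Bm m p:ℝ):ℂ) * Complex.sin ((θ:ℂ)/2) * ((m:ℂ))⁻¹ * (p:ℂ) + (-2) * I * eM φ * ((Bm m p:ℝ):ℂ) * (Complex.sin ((θ:ℂ)/2))^3 * ((m:ℂ))⁻¹ * (p:ℂ) + (-1) * I * eM φ * ((Bm m p:ℝ):ℂ) * ((Ee m p:ℝ):ℂ) * Complex.sin ((θ:ℂ)/2) * ((m:ℂ))⁻¹) * hab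
        + ((-1) * I * eM φ * Complex.sin ((θ:ℂ)/2) * ((m:ℂ))⁻¹) * h1C
        + ((-2) * I * eM φ * ((Bm m p:ℝ):ℂ) * Complex.sin ((θ:ℂ)/2) * ((m:ℂ))⁻¹ * (p:ℂ)) * hscC
    · linear_combination (I * eP φ * ((Bp m p:ℝ):ℂ) * Complex.cos ((θ:ℂ)/2)) * hmu
        + (I * eP φ * ((Bm m p:ℝ):ℂ) * Complex.cos ((θ:ℂ)/2) * ((m:ℂ))⁻¹ * (p:ℂ) + (-2) * I * eP φ * ((Bm m p:ℝ):ℂ) * (Complex.sin ((θ:ℂ)/2))^2 * Complex.cos ((θ:ℂ)/2) * ((m:ℂ))⁻¹ * (p:ℂ) + I * eP φ * ((Bm m p:ℝ):ℂ) * ((Ee m p:ℝ):ℂ) * Complex.cos ((θ:ℂ)/2) * ((m:ℂ))⁻¹) * hab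
        + (I * eP φ * Complex.cos ((θ:ℂ)/2) * ((m:ℂ))⁻¹) * h1C
  have HS2 : (Ξop m p θ φ).mulVec (lamS₂ m p θ φ) = (I) • lamS₁ m p θ φ := by
    funext i
    fin_cases i <;>
      simp [Ξop, lamS₁, lamS₂, lamA₁, lamA₂, Matrix.mulVec, dotProduct,
        Fin.sum_univ_four, hPf, hMf] <;>
      rw [hsinC, hcosC]
    · linear_combination (2 * eM φ * ((Bp m p:ℝ):ℂ) * Complex.sin ((θ:ℂ)/2) * (Complex.cos ((θ:ℂ)/2))^2 * ((m:ℂ))⁻¹ * (p:ℂ) + eM φ * ((Bm m p:ℝ):ℂ) * Complex.sin ((θ:ℂ)/2) + (-1) * eP φ * (eM φ)^2 * ((Bp m p:ℝ):ℂ) * Complex.sin ((θ:ℂ)/2) * ((m:ℂ))⁻¹ * (p:ℂ) + 2 * eP φ * (eM φ)^2 * ((Bp m p:ℝ):ℂ) * (Complex.sin ((θ:ℂ)/2))^3 * ((m:ℂ))⁻¹ * (p:ℂ) + (-1) * eP φ * (eM φ)^2 * ((Bp m p:ℝ):ℂ) * ((Ee m p:ℝ):ℂ) * Complex.sin ((θ:ℂ)/2)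 * ((m:ℂ))⁻¹) * hI
        + (eM φ * ((Bm m p:ℝ):ℂ) * Complex.sin ((θ:ℂ)/2)) * hmu
        + (eM φ * ((Bp m p:ℝ):ℂ) * Complex.sin ((θ:ℂ)/2) * ((m:ℂ))⁻¹ * (p:ℂ) + (-2) * eM φ * ((Bp m p:ℝ):ℂ) * (Complex.sin ((θ:ℂ)/2))^3 * ((m:ℂ))⁻¹ * (p:ℂ) + eM φ * ((Bp m p:ℝ):ℂ) * ((Ee m p:ℝ):ℂ) * Complex.sin ((θ:ℂ)/2) * ((m:ℂ))⁻¹) * hab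
        + (eM φ * Complex.sin ((θ:ℂ)/2) * ((m:ℂ))⁻¹) * h2C
        + ((-2) * eM φ * ((Bp m p:ℝ):ℂ) * Complex.sin ((θ:ℂ)/2) * ((m:ℂ))⁻¹ * (p:ℂ)) * hscC
    · linear_combination ((-2) * eP φ * ((Bp m p:ℝ):ℂ) * (Complex.sin ((θ:ℂ)/2))^2 * Complex.cos ((θ:ℂ)/2) * ((m:ℂ))⁻¹ * (p:ℂ) + (-1) * eP φ * ((Bm m p:ℝ):ℂ) * Complex.cos ((θ:ℂ)/2) + (-1) * (eP φ)^2 * eM φ * ((Bp m p:ℝ):ℂ) * Complex.cos ((θ:ℂ)/2) * ((m:ℂ))⁻¹ * (p:ℂ) + 2 * (eP φ)^2 * eM φ * ((Bp m p:ℝ):ℂ) * (Complex.sin ((θ:ℂ)/2))^2 * Complex.cos ((θ:ℂ)/2) * ((m:ℂ))⁻¹ * (p:ℂ) + (eP φ)^2 * eM φ * ((Bp m p:ℝ):ℂ) * ((Ee m p:ℝ):ℂ) * Complex.cos ((θ:ℂ)/2) * ((m:ℂ))⁻¹) * hI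
        + ((-1) * eP φ * ((Bm m p:ℝ):ℂ) * Complex.cos ((θ:ℂ)/2)) * hmu
        + (eP φ * ((Bp m p:ℝ):ℂ) * Complex.cos ((θ:ℂ)/2) * ((m:ℂ))⁻¹ * (p:ℂ) + (-2) * eP φ * ((Bp m p:ℝ):ℂ) * (Complex.sin ((θ:ℂ)/2))^2 * Complex.cos ((θ:ℂ)/2) * ((m:ℂ))⁻¹ * (p:ℂ) + (-1) * eP φ * ((Bp m p:ℝ):ℂ) * ((Ee m p:ℝ):ℂ) * Complex.cos ((θ:ℂ)/2) * ((m:ℂ))⁻¹) * hab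
        + ((-1) * eP φ * Complex.cos ((θ:ℂ)/2) * ((m:ℂ))⁻¹) * h2C
    · linear_combination (I * eM φ * ((Bm m p:ℝ):ℂ) * Complex.cos ((θ:ℂ)/2)) * hmu
        + ((-1) * I * eM φ * ((Bp m p:ℝ):ℂ) * Complex.cos ((θ:ℂ)/2) * ((m:ℂ))⁻¹ * (p:ℂ) + 2 * I * eM φ * ((Bp m p:ℝ):ℂ) * (Complex.sin ((θ:ℂ)/2))^2 * Complex.cos ((θ:ℂ)/2) * ((m:ℂ))⁻¹ * (p:ℂ) + I * eM φ * ((Bp m p:ℝ):ℂ) * ((Ee m p:ℝ):ℂ) * Complex.cos ((θ:ℂ)/2) * ((m:ℂ))⁻¹) * hab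
        + (I * eM φ * Complex.cos ((θ:ℂ)/2) * ((m:ℂ))⁻¹) * h2C
    · linear_combination (I * eP φ * ((Bm m p:ℝ):ℂ) * Complex.sin ((θ:ℂ)/2)) * hmu
        + (I * eP φ * ((Bp m p:ℝ):ℂ) * Complex.sin ((θ:ℂ)/2) * ((m:ℂ))⁻¹ * (p:ℂ) + (-2) * I * eP φ * ((Bp m p:ℝ):ℂ) * (Complex.sin ((θ:ℂ)/2))^3 * ((m:ℂ))⁻¹ * (p:ℂ) + I * eP φ * ((Bp m p:ℝ):ℂ) * ((Ee m p:ℝ):ℂ) * Complex.sin ((θ:ℂ)/2) * ((m:ℂ))⁻¹) * hab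
        + (I * eP φ * Complex.sin ((θ:ℂ)/2) * ((m:ℂ))⁻¹) * h2C
        + ((-2) * I * eP φ * ((Bp m p:ℝ):ℂ) * Complex.sin ((θ:ℂ)/2) * ((m:ℂ))⁻¹ * (p:ℂ)) * hscC
  have HA1 : (Ξop m p θ φ).mulVec (lamA₁ m p θ φ) = (-I) • lamA₂ m p θ φ := by
    funext i
    fin_cases i <;>
      simp [Ξop, lamS₁, lamS₂, lamA₁, lamA₂, Matrix.mulVec, dotProduct,
        Fin.sum_univ_four, hPf, hMf] <;>
      rw [hsinC, hcosC]
    · linear_combination ((-1) * eM φ * ((Bp m p:ℝ):ℂ) * Complex.cos ((θ:ℂ)/2) + 2 * eM φ * ((Bm m p:ℝ):ℂ) * (Complex.sin ((θ:ℂ)/2))^2 * Complex.cos ((θ:ℂ)/2) * ((m:ℂ))⁻¹ * (p:ℂ) + eP φ * (eM φ)^2 * ((Bm m p:ℝ):ℂ) * Complex.cos ((θ:ℂ)/2) * ((m:ℂ))⁻¹ * (p:ℂ) + (-2) * eP φ * (eM φ)^2 * ((Bm m p:ℝ):ℂ) * (Complex.sin ((θ:ℂ)/2))^2 * Complex.cos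 ((θ:ℂ)/2) * ((m:ℂ))⁻¹ * (p:ℂ) + eP φ * (eM φ)^2 * ((Bm m p:ℝ):ℂ) * ((Ee m p:ℝ):ℂ) * Complex.cos ((θ:ℂ)/2) * ((m:ℂ))⁻¹) * hI
        + ((-1) * eM φ * ((Bp m p:ℝ):ℂ) * Complex.cos ((θ:ℂ)/2)) * hmu
        + ((-1) * eM φ * ((Bm m p:ℝ):ℂ) * Complex.cos ((θ:ℂ)/2) * ((m:ℂ))⁻¹ * (p:ℂ) + 2 * eM φ * ((Bm m p:ℝ):ℂ) * (Complex.sin ((θ:ℂ)/2))^2 * Complex.cos ((θ:ℂ)/2) * ((m:ℂ))⁻¹ * (p:ℂ) + (-1) * eM φ * ((Bm m p:ℝ):ℂ) * ((Ee m p:ℝ):ℂ) * Complex.cos ((θ:ℂ)/2) * ((m:ℂ))⁻¹) * hab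
        + ((-1) * eM φ * Complex.cos ((θ:ℂ)/2) * ((m:ℂ))⁻¹) * h1C
    · linear_combination ((-1) * eP φ * ((Bp m p:ℝ):ℂ) * Complex.sin ((θ:ℂ)/2) + 2 * eP φ * ((Bm m p:ℝ):ℂ) * Complex.sin ((θ:ℂ)/2) * (Complex.cos ((θ:ℂ)/2))^2 * ((m:ℂ))⁻¹ * (p:ℂ) + (-1) * (eP φ)^2 * eM φ * ((Bm m p:ℝ):ℂ) * Complex.sin ((θ:ℂ)/2) * ((m:ℂ))⁻¹ * (p:ℂ) + 2 * (eP φ)^2 * eM φ * ((Bm m p:ℝ):ℂ) * (Complex.sin ((θ:ℂ)/2))^3 * ((m:ℂ))⁻¹ * (p:ℂ) + (eP φ)^2 * eM φ * ((Bm m p:ℝ):ℂ) * ((Ee m p:ℝ):ℂ) * Complex.sin ((θ:ℂ)/2) * ((m:ℂ))⁻¹) * hI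
        + ((-1) * eP φ * ((Bp m p:ℝ):ℂ) * Complex.sin ((θ:ℂ)/2)) * hmu
        + (eP φ * ((Bm m p:ℝ):ℂ) * Complex.sin ((θ:ℂ)/2) * ((m:ℂ))⁻¹ * (p:ℂ) + (-2) * eP φ * ((Bm m p:ℝ):ℂ) * (Complex.sin ((θ:ℂ)/2))^3 * ((m:ℂ))⁻¹ * (p:ℂ) + (-1) * eP φ * ((Bm m p:ℝ):ℂ) * ((Ee m p:ℝ):ℂ) * Complex.sin ((θ:ℂ)/2) * ((m:ℂ))⁻¹) * hab
        + ((-1) * eP φ * Complex.sin ((θ:ℂ)/2) * ((m:ℂ))⁻¹) * h1C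
        + ((-2) * eP φ * ((Bm m p:ℝ):ℂ) * Complex.sin ((θ:ℂ)/2) * ((m:ℂ))⁻¹ * (p:ℂ)) * hscC
    · linear_combination ((-1) * I * eM φ * ((Bp m p:ℝ):ℂ) * Complex.sin ((θ:ℂ)/2)) * hmu
        + (I * eM φ * ((Bm m p:ℝ):ℂ) * Complex.sin ((θ:ℂ)/2) * ((m:ℂ))⁻¹ * (p:ℂ) + (-2) * I * eM φ * ((Bm m p:ℝ):ℂ) * (Complex.sin ((θ:ℂ)/2))^3 * ((m:ℂ))⁻¹ * (p:ℂ) + (-1) * I * eM φ * ((Bm m p:ℝ):ℂ) * ((Ee m p:ℝ):ℂ) * Complex.sin ((θ:ℂ)/2) * ((m:ℂ))⁻¹) * hab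
        + ((-1) * I * eM φ * Complex.sin ((θ:ℂ)/2) * ((m:ℂ))⁻¹) * h1C
        + ((-2) * I * eM φ * ((Bm m p:ℝ):ℂ) * Complex.sin ((θ:ℂ)/2) * ((m:ℂ))⁻¹ * (p:ℂ)) * hscC
    · linear_combination (I * eP φ * ((Bp m p:ℝ):ℂ) * Complex.cos ((θ:ℂ)/2)) * hmu
        + (I * eP φ * ((Bm m p:ℝ):ℂ) * Complex.cos ((θ:ℂ)/2) * ((m:ℂ))⁻¹ * (p:ℂ) + (-2) * I * eP φ * ((Bm m p:ℝ):ℂ) * (Complex.sin ((θ:ℂ)/2))^2 * Complex.cos ((θ:ℂ)/2) * ((m:ℂ))⁻¹ * (p:ℂ) + I * eP φ * ((Bm m p:ℝ):ℂ) * ((Ee m p:ℝ):ℂ) * Complex.cos ((θ:ℂ)/2) * ((m:ℂ))⁻¹) * hab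
        + (I * eP φ * Complex.cos ((θ:ℂ)/2) * ((m:ℂ))⁻¹) * h1C
  have HA2 : (Ξop m p θ φ).mulVec (lamA₂ m p θ φ) = (I) • lamA₁ m p θ φ := by
    funext i
    fin_cases i <;>
      simp [Ξop, lamS₁, lamS₂, lamA₁, lamA₂, Matrix.mulVec, dotProduct,
        Fin.sum_univ_four, hPf, hMf] <;>
      rw [hsinC, hcosC]
    · linear_combination ((-2) * eM φ * ((Bp m p:ℝ):ℂ) * Complex.sin ((θ:ℂ)/2) * (Complex.cos ((θ:ℂ)/2))^2 * ((m:ℂ))⁻¹ * (p:ℂ) + (-1) * eM φ * ((Bm m p:ℝ):ℂ) * Complex.sin ((θ:ℂ)/2) + eP φ * (eM φ)^2 * ((Bp m p:ℝ):ℂ) * Complex.sin ((θ:ℂ)/2) * ((m:ℂ))⁻¹ * (p:ℂ) + (-2) * eP φ * (eM φ)^2 * ((Bp m p:ℝ):ℂ) * (Complex.sin ((θ:ℂ)/2))^3 * ((m:ℂ))⁻¹ * (p:ℂ) + eP φ * (eM φ)^2 * ((Bp m p:ℝ):ℂ) * ((Ee m p:ℝ):ℂ) * Complex.sin ((θ:ℂ)/2)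 * ((m:ℂ))⁻¹) * hI
        + ((-1) * eM φ * ((Bm m p:ℝ):ℂ) * Complex.sin ((θ:ℂ)/2)) * hmu
        + ((-1) * eM φ * ((Bp m p:ℝ):ℂ) * Complex.sin ((θ:ℂ)/2) * ((m:ℂ))⁻¹ * (p:ℂ) + 2 * eM φ * ((Bp m p:ℝ):ℂ) * (Complex.sin ((θ:ℂ)/2))^3 * ((m:ℂ))⁻¹ * (p:ℂ) + (-1) * eM φ * ((Bp m p:ℝ):ℂ) * ((Ee m p:ℝ):ℂ) * Complex.sin ((θ:ℂ)/2) * ((m:ℂ))⁻¹) * hab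
        + ((-1) * eM φ * Complex.sin ((θ:ℂ)/2) * ((m:ℂ))⁻¹) * h2C
        + (2 * eM φ * ((Bp m p:ℝ):ℂ) * Complex.sin ((θ:ℂ)/2) * ((m:ℂ))⁻¹ * (p:ℂ)) * hscC
    · linear_combination (2 * eP φ * ((Bp m p:ℝ):ℂ) * (Complex.sin ((θ:ℂ)/2))^2 * Complex.cos ((θ:ℂ)/2) * ((m:ℂ))⁻¹ * (p:ℂ) + eP φ * ((Bm m p:ℝ):ℂ) * Complex.cos ((θ:ℂ)/2) + (eP φ)^2 * eM φ * ((Bp m p:ℝ):ℂ) * Complex.cos ((θ:ℂ)/2) * ((m:ℂ))⁻¹ * (p:ℂ) + (-2) * (eP φ)^2 * eM φ * ((Bp m p:ℝ):ℂ) * (Complex.sin ((θ:ℂ)/2))^2 * Complex.cos ((θ:ℂ)/2) * ((m:ℂ))⁻¹ * (p:ℂ) + (-1) * (eP φ)^2 * eM φ * ((Bp m p:ℝ):ℂ) * ((Ee m p:ℝ):ℂ) * Complex.cos ((θ:ℂ)/2) * ((m:ℂ))⁻¹) * hI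
        + (eP φ * ((Bm m p:ℝ):ℂ) * Complex.cos ((θ:ℂ)/2)) * hmu
        + ((-1) * eP φ * ((Bp m p:ℝ):ℂ) * Complex.cos ((θ:ℂ)/2) * ((m:ℂ))⁻¹ * (p:ℂ) + 2 * eP φ * ((Bp m p:ℝ):ℂ) * (Complex.sin ((θ:ℂ)/2))^2 * Complex.cos ((θ:ℂ)/2) * ((m:ℂ))⁻¹ * (p:ℂ) + eP φ * ((Bp m p:ℝ):ℂ) * ((Ee m p:ℝ):ℂ) * Complex.cos ((θ:ℂ)/2) * ((m:ℂ))⁻¹) * hab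
        + (eP φ * Complex.cos ((θ:ℂ)/2) * ((m:ℂ))⁻¹) * h2C
    · linear_combination (I * eM φ * ((Bm m p:ℝ):ℂ) * Complex.cos ((θ:ℂ)/2)) * hmu
        + ((-1) * I * eM φ * ((Bp m p:ℝ):ℂ) * Complex.cos ((θ:ℂ)/2) * ((m:ℂ))⁻¹ * (p:ℂ) + 2 * I * eM φ * ((Bp m p:ℝ):ℂ) * (Complex.sin ((θ:ℂ)/2))^2 * Complex.cos ((θ:ℂ)/2) * ((m:ℂ))⁻¹ * (p:ℂ) + I * eM φ * ((Bp m p:ℝ):ℂ) * ((Ee m p:ℝ):ℂ) * Complex.cos ((θ:ℂ)/2) * ((m:ℂ))⁻¹) * hab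
        + (I * eM φ * Complex.cos ((θ:ℂ)/2) * ((m:ℂ))⁻¹) * h2C
    · linear_combination (I * eP φ * ((Bm m p:ℝ):ℂ) * Complex.sin ((θ:ℂ)/2)) * hmu
        + (I * eP φ * ((Bp m p:ℝ):ℂ) * Complex.sin ((θ:ℂ)/2) * ((m:ℂ))⁻¹ * (p:ℂ) + (-2) * I * eP φ * ((Bp m p:ℝ):ℂ) * (Complex.sin ((θ:ℂ)/2))^3 * ((m:ℂ))⁻¹ * (p:ℂ) + I * eP φ * ((Bp m p:ℝ):ℂ) * ((Ee m p:ℝ):ℂ) * Complex.sin ((θ:ℂ)/2) * ((m:ℂ))⁻¹) * hab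
        + (I * eP φ * Complex.sin ((θ:ℂ)/2) * ((m:ℂ))⁻¹) * h2C
        + ((-2) * I * eP φ * ((Bp m p:ℝ):ℂ) * Complex.sin ((θ:ℂ)/2) * ((m:ℂ))⁻¹ * (p:ℂ)) * hscC
  refine ⟨HS1, HS2, HA1, HA2, ?_, ?_, ?_, ?_⟩
  · rw [HS1, star_smul, Matrix.smul_vecMul]; simp
  · rw [HA1, star_smul, Matrix.smul_vecMul]; simp
  · rw [HS2, star_smul, Matrix.smul_vecMul]; simp
  · rw [HA2, star_smul, Matrix.smul_vecMul]; simp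
end

section
/- Under the Elko dual structure the boosted Elko spinors obey the orthonormality relations: ¬λ^S_α · λ^S_{α'} = 2m·δ_{αα'} and ¬λ^A_α · λ^A_{α'} = -2m·δ_{αα'} for α, α' ∈ {(-,+), (+,-)}, and all mixed products vanish: ¬λ^S_α · λ^A_{α'} = 0 and ¬λ^A_α · λ^S_{α'} = 0 for all α, α'. -/
open Matrix Complex

lemma BpBm (m p : ℝ) (hm : 0 < m) (hp : 0 ≤ p) : Bp m p * Bm m p = m := by
  have hE2 : Ee m p ^ 2 = p^2 + m^2 := Real.sq_sqrt (by positivity)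
  have hE0 : 0 ≤ Ee m p := Real.sqrt_nonneg _
  have hEm : 0 < Ee m p + m := by linarith
  unfold Bp Bm
  set S := Real.sqrt ((Ee m p + m)/2) with hSd
  have hS : S^2 = (Ee m p + m)/2 := Real.sq_sqrt (by positivity)
  have hne : Ee m p + m ≠ 0 := hEm.ne'
  field_simp
  nlinarith [hS, hE2]

lemma star_vec4 (a b c d : ℂ) : star ![a,b,c,d] = ![star a, star b, star c, star d] := by
  funext i; fin_cases i <;> simp

lemma sc (θ : ℝ) : ((Real.sin (θ/2) : ℝ) : ℂ)^2 + ((Real.cos (θ/2) : ℝ) : ℂ)^2 = 1 := by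
  exact_mod_cast Real.sin_sq_add_cos_sq (θ/2)

set_option maxRecDepth 8000
set_option maxHeartbeats 3200000

/-- Under the Elko dual structure the boosted Elko spinors obey the orthonormality
relations ¬λ^S_α λ^S_α' = 2m δ, ¬λ^A_α λ^A_α' = -2m δ, with all mixed products zero. -/
theorem elko_orthonormality (m p θ φ : ℝ) (hm : 0 < m) (hp : 0 ≤ p) :
    -- self-conjugate sector
    dotProduct (dS₁ m p θ φ) (lamS₁ m p θ φ) = 2 * (m : ℂ) ∧
    dotProduct (dS₂ m p θ φ) (lamS₂ m p θ φ) = 2 * (m : ℂ) ∧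
    dotProduct (dS₁ m p θ φ) (lamS₂ m p θ φ) = 0 ∧
    dotProduct (dS₂ m p θ φ) (lamS₁ m p θ φ) = 0 ∧
    -- anti-self-conjugate sector
    dotProduct (dA₁ m p θ φ) (lamA₁ m p θ φ) = -(2 * (m : ℂ)) ∧
    dotProduct (dA₂ m p θ φ) (lamA₂ m p θ φ) = -(2 * (m : ℂ)) ∧
    dotProduct (dA₁ m p θ φ) (lamA₂ m p θ φ) = 0 ∧
    dotProduct (dA₂ m p θ φ) (lamA₁ m p θ φ) = 0 ∧
    -- mixed products all vanish
    dotProduct (dS₁ m p θ φ) (lamA₁ m p θ φ) = 0 ∧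
    dotProduct (dS₁ m p θ φ) (lamA₂ m p θ φ) = 0 ∧
    dotProduct (dS₂ m p θ φ) (lamA₁ m p θ φ) = 0 ∧
    dotProduct (dS₂ m p θ φ) (lamA₂ m p θ φ) = 0 ∧
    dotProduct (dA₁ m p θ φ) (lamS₁ m p θ φ) = 0 ∧
    dotProduct (dA₁ m p θ φ) (lamS₂ m p θ φ) = 0 ∧
    dotProduct (dA₂ m p θ φ) (lamS₁ m p θ φ) = 0 ∧
    dotProduct (dA₂ m p θ φ) (lamS₂ m p θ φ) = 0 := by
  have hB : ((Bp m p : ℝ) : ℂ) * ((Bm m p : ℝ) : ℂ) = (m : ℂ) := by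
    rw [← Complex.ofReal_mul, BpBm m p hm hp]
  have he := ePeM φ
  have hs : ((Real.sin (θ*(1/2)) : ℝ):ℂ)^2 + ((Real.cos (θ*(1/2)) : ℝ):ℂ)^2 = 1 := by
    exact_mod_cast Real.sin_sq_add_cos_sq (θ*(1/2))
  have hse : (starRingEnd ℂ) (eP φ) = eM φ := by
    rw [eP, eM, ← Complex.exp_conj]; congr 1
    simp [Complex.conj_I, map_ofNat]
  have hme : (starRingEnd ℂ) (eM φ) = eP φ := by
    rw [eP, eM, ← Complex.exp_conj]; congr 1
    simp [Complex.conj_I, map_ofNat]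
  refine ⟨?_, ?_, ?_, ?_, ?_, ?_, ?_, ?_, ?_, ?_, ?_, ?_, ?_, ?_, ?_, ?_⟩ <;>
  · simp only [dS₁, dS₂, dA₁, dA₂, lamS₁, lamS₂, lamA₁, lamA₂]
    simp [dotProduct, Matrix.vecMul, Fin.sum_univ_four, γ0,
      Matrix.cons_val_two, Matrix.cons_val_three, Complex.conj_I,
      Complex.conj_ofReal, hse, hme, -Complex.ofReal_sin, -Complex.ofReal_cos, _root_.map_mul, _root_.map_one, map_div₀, map_ofNat, map_inv₀, Complex.I_sq, star_vec4]
    try ring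
    try linear_combination (-(2*(eM φ*eP φ)*(((Bm m p:ℝ):ℂ)*((Bp m p:ℝ):ℂ))*(((Real.sin (θ*(1/2)):ℝ):ℂ)^2+((Real.cos (θ*(1/2)):ℝ):ℂ)^2)))*Complex.I_sq + (2*(eM φ*eP φ)*(((Real.sin (θ*(1/2)):ℝ):ℂ)^2+((Real.cos (θ*(1/2)):ℝ):ℂ)^2))*hB + (2*(m:ℂ)*(eM φ*eP φ))*hs + (2*(m:ℂ))*he
    try linear_combination (2*(eM φ*eP φ)*(((Bm m p:ℝ):ℂ)*((Bp m p:ℝ):ℂ))*(((Real.sin (θ*(1/2)):ℝ):ℂ)^2+((Real.cos (θ*(1/2)):ℝ):ℂ)^2))*Complex.I_sq + (-(2*(eM φ*eP φ)*(((Real.sin (θ*(1/2)):ℝ):ℂ)^2+((Real.cos (θ*(1/2)):ℝ):ℂ)^2)))*hB + (-(2*(m:ℂ)*(eM φ*eP φ)))*hs + (-(2*(m:ℂ)))*he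
end

section
/- The matrix G(φ) factorizes through the momentum slash and the Ξ operator and is an involution: G(φ) = (1/m) · pslash · Ξ(p), where pslash := E·γ0 + p·sinθ·cosφ·γ1 + p·sinθ·sinφ·γ2 + p·cosθ·γ3, and G(φ)·G(φ) = 1 (the 4×4 identity). -/
open Matrix Complex

theorem mul_fin_four' (a00 a01 a02 a03 a10 a11 a12 a13 a20 a21 a22 a23 a30 a31 a32 a33 b00 b01 b02 b03 b10 b11 b12 b13 b20 b21 b22 b23 b30 b31 b32 b33 : ℂ) :
    !![a00, a01, a02, a03;
       a10, a11, a12, a13;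
       a20, a21, a22, a23;
       a30, a31, a32, a33] * !![b00, b01, b02, b03;
       b10, b11, b12, b13;
       b20, b21, b22, b23;
       b30, b31, b32, b33] =
    !![a00*b00 + a01*b10 + a02*b20 + a03*b30, a00*b01 + a01*b11 + a02*b21 + a03*b31, a00*b02 + a01*b12 + a02*b22 + a03*b32, a00*b03 + a01*b13 + a02*b23 + a03*b33;
       a10*b00 + a11*b10 + a12*b20 + a13*b30, a10*b01 + a11*b11 + a12*b21 + a13*b31, a10*b02 + a11*b12 + a12*b22 + a13*b32, a10*b03 + a11*b13 + a12*b23 + a13*b33;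
       a20*b00 + a21*b10 + a22*b20 + a23*b30, a20*b01 + a21*b11 + a22*b21 + a23*b31, a20*b02 + a21*b12 + a22*b22 + a23*b32, a20*b03 + a21*b13 + a22*b23 + a23*b33;
       a30*b00 + a31*b10 + a32*b20 + a33*b30, a30*b01 + a31*b11 + a32*b21 + a33*b31, a30*b02 + a31*b12 + a32*b22 + a33*b32, a30*b03 + a31*b13 + a32*b23 + a33*b33] := by
  ext i j
  fin_cases i <;> fin_cases j <;>
    simp [Matrix.mul_apply, Fin.sum_univ_succ, ← add_assoc]

theorem smul_fin_four' (c : ℂ) (a00 a01 a02 a03 a10 a11 a12 a13 a20 a21 a22 a23 a30 a31 a32 a33 : ℂ) :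
    c • !![a00, a01, a02, a03;
       a10, a11, a12, a13;
       a20, a21, a22, a23;
       a30, a31, a32, a33] = !![c*a00, c*a01, c*a02, c*a03;
       c*a10, c*a11, c*a12, c*a13;
       c*a20, c*a21, c*a22, c*a23;
       c*a30, c*a31, c*a32, c*a33] := by
  ext i j
  fin_cases i <;> fin_cases j <;> simp [Matrix.vecHead, Matrix.vecTail]

theorem one_fin_four' : (1 : Matrix (Fin 4) (Fin 4) ℂ) =
    !![1,0,0,0; 0,1,0,0; 0,0,1,0; 0,0,0,1] := by
  ext i j
  fin_cases i <;> fin_cases j <;> simp [Matrix.one_apply, Matrix.vecHead, Matrix.vecTail]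

theorem fin_four_ext {a00 a01 a02 a03 a10 a11 a12 a13 a20 a21 a22 a23 a30 a31 a32 a33 b00 b01 b02 b03 b10 b11 b12 b13 b20 b21 b22 b23 b30 b31 b32 b33 : ℂ}
    (h00 : a00 = b00) (h01 : a01 = b01) (h02 : a02 = b02) (h03 : a03 = b03) (h10 : a10 = b10) (h11 : a11 = b11) (h12 : a12 = b12) (h13 : a13 = b13) (h20 : a20 = b20) (h21 : a21 = b21) (h22 : a22 = b22) (h23 : a23 = b23) (h30 : a30 = b30) (h31 : a31 = b31) (h32 : a32 = b32) (h33 : a33 = b33) :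
    !![a00, a01, a02, a03;
       a10, a11, a12, a13;
       a20, a21, a22, a23;
       a30, a31, a32, a33] = !![b00, b01, b02, b03;
       b10, b11, b12, b13;
       b20, b21, b22, b23;
       b30, b31, b32, b33] := by
  subst_vars; rfl

set_option maxHeartbeats 1000000 in
/-- G(φ) = (1/m)·pslash·Ξ(p) and G(φ) is an involution. -/
theorem G_factorizes_and_is_involution (m p θ φ : ℝ) (hm : 0 < m) (hp : 0 ≤ p) :
    Gmat φ = (1/(m : ℂ)) • (pslash m p θ φ * Ξop m p θ φ) ∧
    Gmat φ * Gmat φ = 1 := by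
  have hm' : (m:ℂ) ≠ 0 := by exact_mod_cast hm.ne'
  have hE : ((Ee m p : ℝ):ℂ)^2 = (p:ℂ)^2 + (m:ℂ)^2 := by
    have : (Ee m p)^2 = p^2 + m^2 := Real.sq_sqrt (by positivity)
    exact_mod_cast congrArg (Complex.ofReal) this
  have hθ : ((Real.sin θ : ℝ):ℂ)^2 + ((Real.cos θ : ℝ):ℂ)^2 = 1 := by
    exact_mod_cast congrArg Complex.ofReal (Real.sin_sq_add_cos_sq θ)
  have hφ : ((Real.sin φ : ℝ):ℂ)^2 + ((Real.cos φ : ℝ):ℂ)^2 = 1 := by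
    exact_mod_cast congrArg Complex.ofReal (Real.sin_sq_add_cos_sq φ)
  have hθc : Complex.sin (θ:ℂ)^2 + Complex.cos (θ:ℂ)^2 = 1 := Complex.sin_sq_add_cos_sq _
  have hφc : Complex.sin (φ:ℂ)^2 + Complex.cos (φ:ℂ)^2 = 1 := Complex.sin_sq_add_cos_sq _
  have heP : ePf φ = (Real.cos φ : ℂ) + (Real.sin φ : ℂ) * I := by
    rw [ePf, mul_comm, Complex.exp_mul_I, Complex.ofReal_cos, Complex.ofReal_sin]
  have heM : eMf φ = (Real.cos φ : ℂ) - (Real.sin φ : ℂ) * I := by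
    have h1 : -(I * (φ:ℂ)) = ((-φ:ℝ):ℂ) * I := by push_cast; ring
    rw [eMf, h1, Complex.exp_mul_I, Complex.ofReal_neg, Complex.cos_neg, Complex.sin_neg,
      Complex.ofReal_cos, Complex.ofReal_sin, neg_mul, ← sub_eq_add_neg]
  have hps : pslash m p θ φ =
      !![0, 0, ((Ee m p : ℝ):ℂ) + ((p * Real.cos θ : ℝ):ℂ), ((p * Real.sin θ * Real.cos φ : ℝ):ℂ) - ((p * Real.sin θ * Real.sin φ : ℝ):ℂ)*I;
         0, 0, ((p * Real.sin θ * Real.cos φ : ℝ):ℂ) + ((p * Real.sin θ * Real.sin φ : ℝ):ℂ)*I, ((Ee m p : ℝ):ℂ) - ((p * Real.cos θ : ℝ):ℂ);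
         ((Ee m p : ℝ):ℂ) - ((p * Real.cos θ : ℝ):ℂ), -((p * Real.sin θ * Real.cos φ : ℝ):ℂ) + ((p * Real.sin θ * Real.sin φ : ℝ):ℂ)*I, 0, 0;
         -((p * Real.sin θ * Real.cos φ : ℝ):ℂ) - ((p * Real.sin θ * Real.sin φ : ℝ):ℂ)*I, ((Ee m p : ℝ):ℂ) + ((p * Real.cos θ : ℝ):ℂ), 0, 0] := by
    ext i j
    fin_cases i <;> fin_cases j <;> simp [pslash, γ0, γ1, γ2, γ3, Matrix.vecHead, Matrix.vecTail] <;> ring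
  constructor
  · rw [hps, Ξop, heP, heM, Matrix.mul_smul, smul_smul, mul_fin_four', smul_fin_four', Gmat,
      heP, heM]
    refine fin_four_ext ?_ ?_ ?_ ?_ ?_ ?_ ?_ ?_ ?_ ?_ ?_ ?_ ?_ ?_ ?_ ?_ <;> push_cast
    · ring
    · ring
    · field_simp
      linear_combination ((p:ℂ)*(p:ℂ)*(Complex.sin (θ:ℂ))*(Complex.cos (θ:ℂ))*Complex.I*Complex.I*Complex.I + (Ee m p : ℂ)*(p:ℂ)*(Complex.sin (θ:ℂ))*Complex.I*Complex.I*Complex.I) * hφc + ((p:ℂ)*(p:ℂ)*(Complex.sin (θ:ℂ))*(Complex.cos (θ:ℂ))*Complex.I + (-1)*(p:ℂ)*(p:ℂ)*(Complex.sin (θ:ℂ))*(Complex.cos (θ:ℂ))*(Complex.cos (φ:ℂ))*(Complex.cos (φ:ℂ))*Complex.I + (Ee m p : ℂ)*(p:ℂ)*(Complex.sin (θ:ℂ))*Complex.I + (-1)*(Ee m p : ℂ)*(p:ℂ)*(Complex.sin (θ:ℂ))*(Complex.cos (φ:ℂ))*(Complex.cos (φ:ℂ))*Complex.I) * Complex.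I_sq
    · field_simp
      linear_combination ((Complex.cos (φ:ℂ))*Complex.I + (-1)*(Complex.sin (φ:ℂ))*Complex.I*Complex.I) * hE + ((-1)*(p:ℂ)*(p:ℂ)*(Complex.cos (φ:ℂ))*Complex.I + (p:ℂ)*(p:ℂ)*(Complex.sin (φ:ℂ))*Complex.I*Complex.I) * hθc
    · ring
    · ring
    · field_simp
      linear_combination ((-1)*(Complex.cos (φ:ℂ))*Complex.I + (-1)*(Complex.sin (φ:ℂ))*Complex.I*Complex.I) * hE + ((p:ℂ)*(p:ℂ)*(Complex.cos (φ:ℂ))*Complex.I + (p:ℂ)*(p:ℂ)*(Complex.sin (φ:ℂ))*Complex.I*Complex.I) * hθc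
    · field_simp
      linear_combination ((p:ℂ)*(p:ℂ)*(Complex.sin (θ:ℂ))*(Complex.cos (θ:ℂ))*Complex.I*Complex.I*Complex.I + (-1)*(Ee m p : ℂ)*(p:ℂ)*(Complex.sin (θ:ℂ))*Complex.I*Complex.I*Complex.I) * hφc + ((p:ℂ)*(p:ℂ)*(Complex.sin (θ:ℂ))*(Complex.cos (θ:ℂ))*Complex.I + (-1)*(p:ℂ)*(p:ℂ)*(Complex.sin (θ:ℂ))*(Complex.cos (θ:ℂ))*(Complex.cos (φ:ℂ))*(Complex.cos (φ:ℂ))*Complex.I + (-1)*(Ee m p : ℂ)*(p:ℂ)*(Complex.sin (θ:ℂ))*Complex.I + (Ee m p : ℂ)*(p:ℂ)*(Complex.sin (θ:ℂ))*(Complex.cos (φ:ℂ))*(Complex.cos (φ:ℂ))*Complex.I) * Complex.I_sq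
    · field_simp
      linear_combination ((p:ℂ)*(p:ℂ)*(Complex.sin (θ:ℂ))*(Complex.cos (θ:ℂ))*Complex.I*Complex.I*Complex.I + (-1)*(Ee m p : ℂ)*(p:ℂ)*(Complex.sin (θ:ℂ))*Complex.I*Complex.I*Complex.I) * hφc + ((p:ℂ)*(p:ℂ)*(Complex.sin (θ:ℂ))*(Complex.cos (θ:ℂ))*Complex.I + (-1)*(p:ℂ)*(p:ℂ)*(Complex.sin (θ:ℂ))*(Complex.cos (θ:ℂ))*(Complex.cos (φ:ℂ))*(Complex.cos (φ:ℂ))*Complex.I + (-1)*(Ee m p : ℂ)*(p:ℂ)*(Complex.sin (θ:ℂ))*Complex.I + (Ee m p : ℂ)*(p:ℂ)*(Complex.sin (θ:ℂ))*(Complex.cos (φ:ℂ))*(Complex.cos (φ:ℂ))*Complex.I) * Complex.I_sq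
    · field_simp
      linear_combination ((Complex.cos (φ:ℂ))*Complex.I + (-1)*(Complex.sin (φ:ℂ))*Complex.I*Complex.I) * hE + ((-1)*(p:ℂ)*(p:ℂ)*(Complex.cos (φ:ℂ))*Complex.I + (p:ℂ)*(p:ℂ)*(Complex.sin (φ:ℂ))*Complex.I*Complex.I) * hθc
    · ring
    · ring
    · field_simp
      linear_combination ((-1)*(Complex.cos (φ:ℂ))*Complex.I + (-1)*(Complex.sin (φ:ℂ))*Complex.I*Complex.I) * hE + ((p:ℂ)*(p:ℂ)*(Complex.cos (φ:ℂ))*Complex.I + (p:ℂ)*(p:ℂ)*(Complex.sin (φ:ℂ))*Complex.I*Complex.I) * hθc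
    · field_simp
      linear_combination ((p:ℂ)*(p:ℂ)*(Complex.sin (θ:ℂ))*(Complex.cos (θ:ℂ))*Complex.I*Complex.I*Complex.I + (Ee m p : ℂ)*(p:ℂ)*(Complex.sin (θ:ℂ))*Complex.I*Complex.I*Complex.I) * hφc + ((p:ℂ)*(p:ℂ)*(Complex.sin (θ:ℂ))*(Complex.cos (θ:ℂ))*Complex.I + (-1)*(p:ℂ)*(p:ℂ)*(Complex.sin (θ:ℂ))*(Complex.cos (θ:ℂ))*(Complex.cos (φ:ℂ))*(Complex.cos (φ:ℂ))*Complex.I + (Ee m p : ℂ)*(p:ℂ)*(Complex.sin (θ:ℂ))*Complex.I + (-1)*(Ee m p : ℂ)*(p:ℂ)*(Complex.sin (θ:ℂ))*(Complex.cos (φ:ℂ))*(Complex.cos (φ:ℂ))*Complex.I) * Complex.I_sq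
    · ring
    · ring
  · rw [Gmat, heP, heM, mul_fin_four', one_fin_four']
    refine fin_four_ext ?_ ?_ ?_ ?_ ?_ ?_ ?_ ?_ ?_ ?_ ?_ ?_ ?_ ?_ ?_ ?_
    · linear_combination (Complex.I*Complex.I*Complex.I*Complex.I) * hφ + ((-1) + Complex.I*Complex.I + (-1)*(Real.cos φ : ℂ)*(Real.cos φ : ℂ)*Complex.I*Complex.I) * Complex.I_sq
    · ring
    · ring
    · ring
    · ring
    · linear_combination (Complex.I*Complex.I*Complex.I*Complex.I) * hφ + ((-1) + Complex.I*Complex.I + (-1)*(Real.cos φ : ℂ)*(Real.cos φ : ℂ)*Complex.I*Complex.I) * Complex.I_sq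
    · ring
    · ring
    · ring
    · ring
    · linear_combination (Complex.I*Complex.I*Complex.I*Complex.I) * hφ + ((-1) + Complex.I*Complex.I + (-1)*(Real.cos φ : ℂ)*(Real.cos φ : ℂ)*Complex.I*Complex.I) * Complex.I_sq
    · ring
    · ring
    · ring
    · ring
    · linear_combination (Complex.I*Complex.I*Complex.I*Complex.I) * hφ + ((-1) + Complex.I*Complex.I + (-1)*(Real.cos φ : ℂ)*(Real.cos φ : ℂ)*Complex.I*Complex.I) * Complex.I_sq
end

section
/- The Fierz–Pauli–Kofink contraction identity holds for arbitrary spinors: for every row covector w ∈ ℂ⁴ (acting on columns by matrix multiplication) and every column ψ ∈ ℂ⁴, (w·γ0·ψ)·(γ0·ψ) - Σ_{k=1}^{3} (w·γk·ψ)·(γk·ψ) = (w·ψ)·ψ - (w·γ5·ψ)·(γ5·ψ), as an equality of vectors in ℂ⁴. (Taking w = ¬λ·Γ for any 4×4 matrix Γ gives the identity (¬λ Γ γ_μ λ)γ^μλ = (¬λ Γ λ)λ - (¬λ Γ γ5 λ)γ5 λ used to derive the relations J_μγ^μλ_L = (A - iB)λ_R and their companions.) -/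
open Matrix Complex

noncomputable section

/-- γ5 := -i γ0γ1γ2γ3 -/
def γ5 : Matrix (Fin 4) (Fin 4) ℂ := (-I) • (γ0 * γ1 * γ2 * γ3)

end

set_option maxHeartbeats 2000000 in
/-- The Fierz–Pauli–Kofink contraction identity:
(wγ_μψ)γ^μψ = (wψ)ψ - (wγ5ψ)γ5ψ, contracting with the Minkowski metric diag(1,-1,-1,-1). -/
theorem fierz_pauli_kofink_contraction (w ψ : Fin 4 → ℂ) :
    (dotProduct w (γ0.mulVec ψ)) • γ0.mulVec ψ
      - (dotProduct w (γ1.mulVec ψ)) • γ1.mulVec ψ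
      - (dotProduct w (γ2.mulVec ψ)) • γ2.mulVec ψ
      - (dotProduct w (γ3.mulVec ψ)) • γ3.mulVec ψ
    = (dotProduct w ψ) • ψ
      - (dotProduct w (γ5.mulVec ψ)) • γ5.mulVec ψ := by
  have hγ5 : γ5 = !![1,0,0,0; 0,1,0,0; 0,0,-1,0; 0,0,0,(-1:ℂ)] := by
    ext i j
    fin_cases i <;> fin_cases j <;>
      simp [γ5, γ0, γ1, γ2, γ3, Matrix.mul_apply, Fin.sum_univ_four] <;>
      ring_nf <;> simp [I_sq, Matrix.vecHead, Matrix.vecTail] <;> ring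
  have h0 : γ0.mulVec ψ = ![ψ 2, ψ 3, ψ 0, ψ 1] := by
    funext i; fin_cases i <;> simp [γ0, Matrix.mulVec, dotProduct, Fin.sum_univ_four]
  have h1 : γ1.mulVec ψ = ![ψ 3, ψ 2, -ψ 1, -ψ 0] := by
    funext i; fin_cases i <;> simp [γ1, Matrix.mulVec, dotProduct, Fin.sum_univ_four]
  have h2 : γ2.mulVec ψ = ![-I * ψ 3, I * ψ 2, I * ψ 1, -I * ψ 0] := by
    funext i; fin_cases i <;> simp [γ2, Matrix.mulVec, dotProduct, Fin.sum_univ_four]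
  have h3 : γ3.mulVec ψ = ![ψ 2, -ψ 3, -ψ 0, ψ 1] := by
    funext i; fin_cases i <;> simp [γ3, Matrix.mulVec, dotProduct, Fin.sum_univ_four]
  have h5 : γ5.mulVec ψ = ![ψ 0, ψ 1, -ψ 2, -ψ 3] := by
    funext i; fin_cases i <;> simp [hγ5, Matrix.mulVec, dotProduct, Fin.sum_univ_four]
  rw [h0, h1, h2, h3, h5]
  funext i
  simp only [dotProduct, Fin.sum_univ_four, Pi.sub_apply, Pi.smul_apply, smul_eq_mul]
  fin_cases i <;>
    simp <;> ring_nf <;> simp [I_sq] <;> ring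
end
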